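/- Every empty 7-pair whose two spanning faces f_e, f_e' neighbour 7 pairwise different faces has exactly 7 vertices and at least 14 edges. -/

import Mathlib

/-- A combinatorial map (connected graph cellularly embedded in an orientable surface),
given by a set of darts `D`, the edge involution `σ` and the rotation `ρ`. -/
structure CombMap where
  D : Type
  fin : Finite D
  σ : Equiv.Perm D
  ρ : Equiv.Perm D
  σ_invol : ∀ d, σ (σ d) = d
  σ_fixfree : ∀ d, σ d ≠ d
  conn : ∀ d d' : D, ∃ g ∈ Subgroup.closure ({σ, ρ} : Set (Equiv.Perm D)), g d = d'

attribute [instance] CombMap.fin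

namespace CombMap

variable (M : CombMap)

/-- The face permutation. -/
def φ : Equiv.Perm M.D := M.ρ * M.σ

def vSetoid : Setoid M.D :=
  ⟨M.ρ.SameCycle, ⟨fun _ => Equiv.Perm.SameCycle.refl _ _,
    Equiv.Perm.SameCycle.symm, Equiv.Perm.SameCycle.trans⟩⟩

def eSetoid : Setoid M.D :=
  ⟨M.σ.SameCycle, ⟨fun _ => Equiv.Perm.SameCycle.refl _ _,
    Equiv.Perm.SameCycle.symm, Equiv.Perm.SameCycle.trans⟩⟩

def fSetoid : Setoid M.D :=
  ⟨M.φ.SameCycle, ⟨fun _ => Equiv.Perm.SameCycle.refl _ _,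
    Equiv.Perm.SameCycle.symm, Equiv.Perm.SameCycle.trans⟩⟩

/-- Vertices are orbits of `ρ`. -/
def Vertex := Quotient M.vSetoid
/-- Edges are orbits of `σ`. -/
def Edge := Quotient M.eSetoid
/-- Faces are orbits of `φ`. -/
def Face := Quotient M.fSetoid

instance : Finite M.Vertex := Quotient.finite _
instance : Finite M.Edge := Quotient.finite _
instance : Finite M.Face := Quotient.finite _

def vtx (d : M.D) : M.Vertex := Quotient.mk M.vSetoid d
def edg (d : M.D) : M.Edge := Quotient.mk M.eSetoid d
def fce (d : M.D) : M.Face := Quotient.mk M.fSetoid d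

noncomputable def nV : ℕ := Nat.card M.Vertex
noncomputable def nE : ℕ := Nat.card M.Edge
noncomputable def nF : ℕ := Nat.card M.Face

/-- The size of a face: the length of its facial walk, i.e. the number of darts in it. -/
noncomputable def faceSize (f : M.Face) : ℕ := Nat.card {d : M.D // M.fce d = f}

/-- The degree of a vertex: the number of darts emanating from it. -/
noncomputable def degree (v : M.Vertex) : ℕ := Nat.card {d : M.D // M.vtx d = v}

/-- The face excess `Σ_f (d(f) - 3)`. -/
noncomputable def faceExcess : ℤ := ∑ᶠ f : M.Face, ((M.faceSize f : ℤ) - 3)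

/-- The underlying graph of the map is simple: no loops, no multiple edges. -/
def Simple : Prop :=
  (∀ d, M.vtx d ≠ M.vtx (M.σ d)) ∧
  ∀ d d', M.vtx d = M.vtx d' → M.vtx (M.σ d) = M.vtx (M.σ d') → M.edg d = M.edg d'

/-- The dual has no loops. -/
def DualLoopFree : Prop := ∀ d, M.fce d ≠ M.fce (M.σ d)

/-- The dual is simple: no loops and no multiple edges. -/
def DualSimple : Prop :=
  M.DualLoopFree ∧
  ∀ d d', M.fce d = M.fce d' → M.fce (M.σ d) = M.fce (M.σ d') → M.edg d = M.edg d'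

/-- The underlying simple graph on the vertices of the map. -/
def graph : SimpleGraph M.Vertex :=
  SimpleGraph.fromRel (fun a b => ∃ d, M.vtx d = a ∧ M.vtx (M.σ d) = b)

/-- The underlying simple graph of the dual map, on the faces of the map. -/
def dualGraph : SimpleGraph M.Face :=
  SimpleGraph.fromRel (fun a b => ∃ d, M.fce d = a ∧ M.fce (M.σ d) = b)

/-- Vertex `v` lies on the face `f`. -/
def VertexOnFace (v : M.Vertex) (f : M.Face) : Prop := ∃ d, M.fce d = f ∧ M.vtx d = v

/-- Faces `f` and `f'` share an edge. -/
def FaceAdj (f f' : M.Face) : Prop := ∃ d, M.fce d = f ∧ M.fce (M.σ d) = f'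

end CombMap

/-- `k`-connectivity of a graph: more than `k` vertices, and removing fewer than `k`
vertices never disconnects it. -/
def KConn {α : Type} (H : SimpleGraph α) (k : ℕ) : Prop :=
  k < Nat.card α ∧ ∀ S : Set α, S.ncard < k → (H.induce Sᶜ).Connected

namespace CombMap

variable (M : CombMap)

/-- An empty `k`-circuit: a map on at most `k` vertices with a spanning face `f_e` of
size `k`, whose underlying graph is simple, whose dual has no loops, and all of whose
dual multi-edges are incident with `f_e`. -/
def IsEmptyCircuit (k : ℕ) (fe : M.Face) : Prop :=
  M.nV ≤ k ∧ M.faceSize fe = k ∧ (∀ v : M.Vertex, M.VertexOnFace v fe) ∧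
  M.Simple ∧ M.DualLoopFree ∧
  ∀ d d', M.fce d = M.fce d' → M.fce (M.σ d) = M.fce (M.σ d') → M.edg d ≠ M.edg d' →
    (M.fce d = fe ∨ M.fce (M.σ d) = fe)

/-- An empty `k`-pair: a map on at most `k` vertices with two spanning faces
`f_e, f_e'` with `d(f_e)+d(f_e') = k` not sharing an edge, whose underlying graph is
simple, whose dual has no loops, and all of whose dual multi-edges are incident with
`f_e` or `f_e'`. -/
def IsEmptyPair (k : ℕ) (fe fe' : M.Face) : Prop :=
  M.nV ≤ k ∧ fe ≠ fe' ∧ M.faceSize fe + M.faceSize fe' = k ∧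
  (∀ v : M.Vertex, M.VertexOnFace v fe ∨ M.VertexOnFace v fe') ∧
  ¬ M.FaceAdj fe fe' ∧
  M.Simple ∧ M.DualLoopFree ∧
  ∀ d d', M.fce d = M.fce d' → M.fce (M.σ d) = M.fce (M.σ d') → M.edg d ≠ M.edg d' →
    (M.fce d = fe ∨ M.fce d = fe' ∨ M.fce (M.σ d) = fe ∨ M.fce (M.σ d) = fe')

end CombMap

namespace CombMap

variable {M : CombMap}

lemma vtx_eq_iff {d d' : M.D} : M.vtx d = M.vtx d' ↔ M.ρ.SameCycle d d' := by
  unfold vtx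
  exact ⟨fun h => Quotient.exact h, fun h => Quotient.sound h⟩

lemma edg_eq_iff {d d' : M.D} : M.edg d = M.edg d' ↔ M.σ.SameCycle d d' := by
  unfold edg
  exact ⟨fun h => Quotient.exact h, fun h => Quotient.sound h⟩

lemma fce_eq_iff {d d' : M.D} : M.fce d = M.fce d' ↔ M.φ.SameCycle d d' := by
  unfold fce
  exact ⟨fun h => Quotient.exact h, fun h => Quotient.sound h⟩

lemma vtx_rho (d : M.D) : M.vtx (M.ρ d) = M.vtx d :=
  ((vtx_eq_iff (d := d)).mpr ⟨1, by simp⟩).symm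

lemma edg_sigma (d : M.D) : M.edg (M.σ d) = M.edg d :=
  ((edg_eq_iff (d := d)).mpr ⟨1, by simp⟩).symm

lemma fce_phi (d : M.D) : M.fce (M.φ d) = M.fce d :=
  ((fce_eq_iff (d := d)).mpr ⟨1, by simp⟩).symm

lemma exists_fce (f : M.Face) : ∃ d, M.fce d = f := Quotient.exists_rep f

end CombMap
section Cyc

variable {α : Type*}

lemma sameCycle_fix {π : Equiv.Perm α} {x y : α} (h : π.SameCycle x y) (hx : π x = x) :
    y = x := by
  obtain ⟨i, hi⟩ := h
  have hfp : Function.IsFixedPt π x := hx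
  exact hi ▸ (hfp.perm_zpow i)

lemma sameCycle_two {π : Equiv.Perm α} {x y : α} (h : π.SameCycle x y) (hx : π (π x) = x) :
    y = x ∨ y = π x := by
  obtain ⟨i, hi⟩ := h
  have h2 : Function.IsFixedPt ⇑(π ^ (2:ℤ)) x := by
    show (π ^ (2:ℤ)) x = x
    rw [show (2:ℤ) = ((2:ℕ):ℤ) by norm_num, zpow_natCast, pow_two, Equiv.Perm.mul_apply]
    exact hx
  have hdecomp : π ^ i = π ^ (i % 2) * (π ^ (2:ℤ)) ^ (i / 2) := by
    rw [← zpow_mul, ← zpow_add]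
    congr 1
    omega
  have h3 : ((π ^ (2:ℤ)) ^ (i / 2)) x = x := h2.perm_zpow (i / 2)
  have hy : y = (π ^ (i % 2)) x := by
    rw [← hi, hdecomp, Equiv.Perm.mul_apply, h3]
  rcases Int.emod_two_eq_zero_or_one i with h | h <;> rw [h] at hy
  · left; simpa using hy
  · right; simpa using hy

end Cyc
namespace CombMap

variable {M : CombMap}

lemma edg_cases {d d' : M.D} (h : M.edg d = M.edg d') : d' = d ∨ d' = M.σ d :=
  sameCycle_two (edg_eq_iff.mp h) (M.σ_invol d)

lemma phi_apply (d : M.D) : M.φ d = M.ρ (M.σ d) := rfl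

/-- no face of size 1: `φ` has no fixed point when the graph is loopless -/
lemma phi_ne (hs : M.Simple) (d : M.D) : M.φ d ≠ d := by
  intro h
  have h1 : M.vtx (M.ρ (M.σ d)) = M.vtx (M.σ d) := vtx_rho _
  rw [← phi_apply, h] at h1
  exact hs.1 d h1

lemma phi2_ne (hs : M.Simple) (hd : M.DualLoopFree) (d : M.D) : M.φ (M.φ d) ≠ d := by
  intro h
  set d' := M.φ d with hd'
  -- ρ (σ d') = d
  have hρ : M.ρ (M.σ d') = d := h
  have hv1 : M.vtx d = M.vtx (M.σ d') := by rw [← hρ]; exact vtx_rho _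
  have hv2 : M.vtx (M.σ d) = M.vtx (M.σ (M.σ d')) := by
    rw [M.σ_invol d']
    have h2 : M.vtx (M.ρ (M.σ d)) = M.vtx (M.σ d) := vtx_rho _
    rw [← phi_apply, ← hd'] at h2
    exact h2.symm
  have he : M.edg d = M.edg (M.σ d') := hs.2 d (M.σ d') hv1 hv2
  rw [edg_sigma] at he
  rcases edg_cases he with h1 | h1
  · exact phi_ne hs d (hd' ▸ h1)
  · have : M.fce (M.σ d) = M.fce d := by rw [← h1, hd']; exact fce_phi d
    exact hd d this.symm

lemma three_le_card {β : Type*} [Finite β] (a b c : β) (hab : a ≠ b) (hac : a ≠ c)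
    (hbc : b ≠ c) : 3 ≤ Nat.card β := by
  classical
  letI := Fintype.ofFinite β
  rw [Nat.card_eq_fintype_card]
  have h : ({a, b, c} : Finset β).card = 3 := by
    rw [Finset.card_insert_of_notMem (by simp [hab, hac]),
      Finset.card_insert_of_notMem (by simp [hbc]), Finset.card_singleton]
  exact h ▸ Finset.card_le_univ _

lemma three_le_faceSize (hs : M.Simple) (hd : M.DualLoopFree) (f : M.Face) :
    3 ≤ M.faceSize f := by
  obtain ⟨d, rfl⟩ := exists_fce f
  have m1 : M.fce (M.φ d) = M.fce d := fce_phi d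
  have m2 : M.fce (M.φ (M.φ d)) = M.fce d := by rw [fce_phi, fce_phi]
  have n1 := phi_ne hs d
  have n2 := phi2_ne hs hd d
  have n3 := phi_ne hs (M.φ d)
  exact three_le_card (⟨d, rfl⟩ : {x : M.D // M.fce x = M.fce d}) ⟨M.φ d, m1⟩
    ⟨M.φ (M.φ d), m2⟩
    (fun h => n1 (congrArg Subtype.val h).symm)
    (fun h => n2 (congrArg Subtype.val h).symm)
    (fun h => n3 (congrArg Subtype.val h).symm)

end CombMap
namespace CombMap

variable {M : CombMap}

lemma card_D_eq_sum_faceSize [Fintype M.Face] :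
    Nat.card M.D = ∑ f : M.Face, M.faceSize f := by
  classical
  letI : Fintype M.D := Fintype.ofFinite _
  rw [← Nat.card_congr (Equiv.sigmaFiberEquiv M.fce)]
  rw [Nat.card_eq_fintype_card, Fintype.card_sigma]
  congr 1
  ext f
  rw [faceSize, Nat.card_eq_fintype_card]

lemma card_edge_fiber (e : M.Edge) : Nat.card {x : M.D // M.edg x = e} = 2 := by
  classical
  obtain ⟨d, rfl⟩ : ∃ d, M.edg d = e := Quotient.exists_rep e
  letI : Fintype M.D := Fintype.ofFinite _
  rw [Nat.card_eq_fintype_card]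
  have huniv : (Finset.univ : Finset {x : M.D // M.edg x = M.edg d}) =
      {⟨d, rfl⟩, ⟨M.σ d, edg_sigma d⟩} := by
    symm
    apply Finset.eq_univ_iff_forall.mpr
    rintro ⟨x, hx⟩
    rcases edg_cases hx.symm with h | h
    · simp [← h]
    · simp [h]
  rw [← Finset.card_univ, huniv]
  rw [Finset.card_insert_of_notMem, Finset.card_singleton]
  simp [Subtype.ext_iff]
  exact fun h => M.σ_fixfree d h.symm

lemma card_D_eq_two_nE : Nat.card M.D = 2 * M.nE := by
  classical
  letI : Fintype M.D := Fintype.ofFinite _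
  letI : Fintype M.Edge := Fintype.ofFinite _
  rw [← Nat.card_congr (Equiv.sigmaFiberEquiv M.edg)]
  rw [Nat.card_eq_fintype_card, Fintype.card_sigma]
  have : ∀ e : M.Edge, Fintype.card {x : M.D // M.edg x = e} = 2 := by
    intro e
    rw [← Nat.card_eq_fintype_card]
    exact card_edge_fiber e
  simp only [this, Finset.sum_const, Finset.card_univ, smul_eq_mul]
  rw [nE, Nat.card_eq_fintype_card, Nat.mul_comm]

end CombMap
/-- Every empty 7-pair whose spanning faces `f_e, f_e'` neighbour 7 pairwise
different faces has exactly 7 vertices and at least 14 edges. -/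
theorem empty_seven_pair_vertices_edges
    (M : CombMap) (fe fe' : M.Face)
    (hpair : M.IsEmptyPair 7 fe fe')
    (hnbrs : Nat.card {f : M.Face // M.FaceAdj fe f ∨ M.FaceAdj fe' f} = 7) :
    M.nV = 7 ∧ 14 ≤ M.nE := by
  classical
  obtain ⟨hV7, hfne, hsum, hspan, hnadj, hsimple, hdlf, _hmulti⟩ := hpair
  set P : M.D → Prop := fun d => M.fce d = fe ∨ M.fce d = fe' with hPdef
  -- no dart has both its faces among {fe, fe'}
  have noP : ∀ x : M.D, P x → P (M.σ x) → False := by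
    rintro x (h1 | h1) (h2 | h2)
    · exact hdlf x (h1.trans h2.symm)
    · exact hnadj ⟨x, h1, h2⟩
    · exact hnadj ⟨M.σ x, h2, by rw [M.σ_invol]; exact h1⟩
    · exact hdlf x (h1.trans h2.symm)
  -- the 7 darts on fe and fe'
  have hD7 : Nat.card {d : M.D // P d} = 7 := by
    have hdisj : Disjoint (fun d => M.fce d = fe) (fun d => M.fce d = fe') := by
      rw [Pi.disjoint_iff]
      intro d
      rw [Prop.disjoint_iff]
      rintro ⟨h1, h2⟩
      exact hfne (h1.symm.trans h2)
    haveI : Finite {d : M.D // M.fce d = fe} := Subtype.finite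
    haveI : Finite {d : M.D // M.fce d = fe'} := Subtype.finite
    rw [Nat.card_congr (subtypeOrEquiv _ _ hdisj), Nat.card_sum]
    exact hsum
  -- injectivity of dart ↦ opposite face, on the 7 darts
  have key : ∀ x y : M.D, P x → P y → M.fce (M.σ x) = M.fce (M.σ y) → x = y := by
    letI : Fintype {d : M.D // P d} := Fintype.ofFinite _
    letI : Fintype {f : M.Face // M.FaceAdj fe f ∨ M.FaceAdj fe' f} := Fintype.ofFinite _
    have hgmem : ∀ x : {d : M.D // P d},
        M.FaceAdj fe (M.fce (M.σ x.1)) ∨ M.FaceAdj fe' (M.fce (M.σ x.1)) := by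
      rintro ⟨x, hx | hx⟩
      · exact Or.inl ⟨x, hx, rfl⟩
      · exact Or.inr ⟨x, hx, rfl⟩
    set g : {d : M.D // P d} → {f : M.Face // M.FaceAdj fe f ∨ M.FaceAdj fe' f} :=
      fun x => ⟨M.fce (M.σ x.1), hgmem x⟩ with hgdef
    have hgsurj : Function.Surjective g := by
      rintro ⟨f, hf | hf⟩ <;> obtain ⟨d, h1, h2⟩ := hf
      · exact ⟨⟨d, Or.inl h1⟩, Subtype.ext h2⟩
      · exact ⟨⟨d, Or.inr h1⟩, Subtype.ext h2⟩
    have hgbij : Function.Bijective g := by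
      rw [Fintype.bijective_iff_surjective_and_card]
      exact ⟨hgsurj, by rw [← Nat.card_eq_fintype_card, ← Nat.card_eq_fintype_card,
        hD7, hnbrs]⟩
    intro x y hx hy hxy
    have h := hgbij.1 (a₁ := ⟨x, hx⟩) (a₂ := ⟨y, hy⟩) (Subtype.ext hxy)
    exact congrArg Subtype.val h
  -- injectivity of darts at a common vertex via their other endpoints
  have dart_inj : ∀ x y : M.D, M.vtx x = M.vtx y → M.vtx (M.σ x) = M.vtx (M.σ y) →
      x = y := by
    intro x y h1 h2
    rcases CombMap.edg_cases (hsimple.2 x y h1 h2) with h | h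
    · exact h.symm
    · exact absurd (by rw [← h]; exact h1) (hsimple.1 x)
  have fce_sigma_rho : ∀ x : M.D, M.fce (M.ρ x) = M.fce (M.σ x) := by
    intro x
    have h := CombMap.fce_phi (M.σ x)
    rw [CombMap.phi_apply, M.σ_invol] at h
    exact h
  -- no two consecutive darts around a vertex can both lie on fe ∪ fe'
  have gap1 : ∀ x y : M.D, P x → P y → M.ρ x ≠ y := by
    intro x y hx hy hxy
    have hface : M.fce (M.σ x) = M.fce y := by rw [← fce_sigma_rho, hxy]
    refine noP x hx ?_
    rcases hy with h | h
    · exact Or.inl (hface.trans h)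
    · exact Or.inr (hface.trans h)
  have gap2 : ∀ x y : M.D, P x → P y → M.ρ (M.ρ x) ≠ y := by
    intro x y hx hy hxy
    set p := M.σ (M.ρ x) with hpdef
    have hfp : M.fce p = M.fce y := by
      have h := fce_sigma_rho (M.ρ x)
      rw [← hpdef, hxy] at h
      exact h.symm
    have hPp : P p := by
      rcases hy with h | h
      · exact Or.inl (hfp.trans h)
      · exact Or.inr (hfp.trans h)
    have hfs : M.fce (M.σ x) = M.fce (M.σ p) := by
      rw [hpdef, M.σ_invol, fce_sigma_rho]
    have hxp : x = p := key x p hx hPp hfs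
    have hrs : M.ρ x = M.σ x := by
      have h := congrArg M.σ hxp
      rw [hpdef, M.σ_invol] at h
      exact h.symm
    exact hsimple.1 x (by rw [← hrs]; exact (CombMap.vtx_rho x).symm)
  -- vertex count
  have h7V : 7 ≤ Nat.card M.Vertex := by
    by_cases hinj : Function.Injective (fun x : {d : M.D // P d} => M.vtx x.1)
    · have h := Nat.card_le_card_of_injective _ hinj
      rw [hD7] at h
      exact h
    · rw [Function.not_injective_iff] at hinj
      obtain ⟨a, b, hvab, hab⟩ := hinj
      obtain ⟨d1, hP1⟩ := a
      obtain ⟨d2, hP2⟩ := b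
      have hd12 : d1 ≠ d2 := fun h => hab (Subtype.ext h)
      have hv12 : M.vtx d1 = M.vtx d2 := hvab
      have rinj : Function.Injective M.ρ := M.ρ.injective
      -- pairwise distinctness facts for the six darts around the common vertex
      have g11 : M.ρ d1 ≠ d1 := gap1 d1 d1 hP1 hP1
      have g12 : M.ρ d1 ≠ d2 := gap1 d1 d2 hP1 hP2
      have g21 : M.ρ d2 ≠ d1 := gap1 d2 d1 hP2 hP1
      have g22 : M.ρ d2 ≠ d2 := gap1 d2 d2 hP2 hP2
      have G11 : M.ρ (M.ρ d1) ≠ d1 := gap2 d1 d1 hP1 hP1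
      have G12 : M.ρ (M.ρ d1) ≠ d2 := gap2 d1 d2 hP1 hP2
      have G21 : M.ρ (M.ρ d2) ≠ d1 := gap2 d2 d1 hP2 hP1
      have G22 : M.ρ (M.ρ d2) ≠ d2 := gap2 d2 d2 hP2 hP2
      have q1 : M.ρ d1 ≠ M.ρ d2 := fun h => hd12 (rinj h)
      have q2 : M.ρ (M.ρ d1) ≠ M.ρ (M.ρ d2) := fun h => hd12 (rinj (rinj h))
      have q3 : M.ρ (M.ρ d1) ≠ M.ρ d2 := fun h => g12 (rinj h)
      have q4 : M.ρ (M.ρ d2) ≠ M.ρ d1 := fun h => g21 (rinj h)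
      have q5 : M.ρ d1 ≠ M.ρ (M.ρ d1) := fun h => g11 (rinj h).symm
      have q6 : M.ρ d2 ≠ M.ρ (M.ρ d2) := fun h => g22 (rinj h).symm
      -- the six darts at the common vertex
      have v1 : M.vtx d1 = M.vtx d1 := rfl
      have v2 : M.vtx (M.ρ d1) = M.vtx d1 := CombMap.vtx_rho d1
      have v3 : M.vtx (M.ρ (M.ρ d1)) = M.vtx d1 := (CombMap.vtx_rho _).trans v2
      have v4 : M.vtx d2 = M.vtx d1 := hv12.symm
      have v5 : M.vtx (M.ρ d2) = M.vtx d1 := (CombMap.vtx_rho d2).trans v4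
      have v6 : M.vtx (M.ρ (M.ρ d2)) = M.vtx d1 := (CombMap.vtx_rho _).trans v5
      -- the other-endpoint map is injective on darts at the common vertex
      have W : ∀ x y : M.D, M.vtx x = M.vtx d1 → M.vtx y = M.vtx d1 → x ≠ y →
          M.vtx (M.σ x) ≠ M.vtx (M.σ y) := by
        intro x y hx hy hxy h
        exact hxy (dart_inj x y (hx.trans hy.symm) h)
      have V : ∀ x : M.D, M.vtx x = M.vtx d1 → M.vtx d1 ≠ M.vtx (M.σ x) := by
        intro x hx
        rw [← hx]
        exact hsimple.1 x
      set w : M.D → M.Vertex := fun x => M.vtx (M.σ x) with hwdef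
      have n1 : M.vtx d1 ∉ ({w d1, w (M.ρ d1), w (M.ρ (M.ρ d1)), w d2, w (M.ρ d2),
          w (M.ρ (M.ρ d2))} : Finset M.Vertex) := by
        simp only [Finset.mem_insert, Finset.mem_singleton]
        push_neg
        exact ⟨V _ v1, V _ v2, V _ v3, V _ v4, V _ v5, V _ v6⟩
      have n2 : w d1 ∉ ({w (M.ρ d1), w (M.ρ (M.ρ d1)), w d2, w (M.ρ d2),
          w (M.ρ (M.ρ d2))} : Finset M.Vertex) := by
        simp only [Finset.mem_insert, Finset.mem_singleton]
        push_neg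
        exact ⟨W _ _ v1 v2 (Ne.symm g11), W _ _ v1 v3 (Ne.symm G11), W _ _ v1 v4 hd12,
          W _ _ v1 v5 (Ne.symm g21), W _ _ v1 v6 (Ne.symm G21)⟩
      have n3 : w (M.ρ d1) ∉ ({w (M.ρ (M.ρ d1)), w d2, w (M.ρ d2),
          w (M.ρ (M.ρ d2))} : Finset M.Vertex) := by
        simp only [Finset.mem_insert, Finset.mem_singleton]
        push_neg
        exact ⟨W _ _ v2 v3 q5, W _ _ v2 v4 g12, W _ _ v2 v5 q1, W _ _ v2 v6 (Ne.symm q4)⟩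
      have n4 : w (M.ρ (M.ρ d1)) ∉ ({w d2, w (M.ρ d2),
          w (M.ρ (M.ρ d2))} : Finset M.Vertex) := by
        simp only [Finset.mem_insert, Finset.mem_singleton]
        push_neg
        exact ⟨W _ _ v3 v4 G12, W _ _ v3 v5 q3, W _ _ v3 v6 q2⟩
      have n5 : w d2 ∉ ({w (M.ρ d2), w (M.ρ (M.ρ d2))} : Finset M.Vertex) := by
        simp only [Finset.mem_insert, Finset.mem_singleton]
        push_neg
        exact ⟨W _ _ v4 v5 (Ne.symm g22), W _ _ v4 v6 (Ne.symm G22)⟩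
      have n6 : w (M.ρ d2) ∉ ({w (M.ρ (M.ρ d2))} : Finset M.Vertex) := by
        simp only [Finset.mem_singleton]
        exact W _ _ v5 v6 q6
      have c7 : ({M.vtx d1, w d1, w (M.ρ d1), w (M.ρ (M.ρ d1)), w d2, w (M.ρ d2),
          w (M.ρ (M.ρ d2))} : Finset M.Vertex).card = 7 := by
        rw [Finset.card_insert_of_notMem n1, Finset.card_insert_of_notMem n2,
          Finset.card_insert_of_notMem n3, Finset.card_insert_of_notMem n4,
          Finset.card_insert_of_notMem n5, Finset.card_insert_of_notMem n6,
          Finset.card_singleton]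
      letI : Fintype M.Vertex := Fintype.ofFinite _
      rw [Nat.card_eq_fintype_card]
      exact c7 ▸ Finset.card_le_univ _
  -- edge count
  letI : Fintype M.Face := Fintype.ofFinite _
  have h28 : 28 ≤ Nat.card M.D := by
    rw [CombMap.card_D_eq_sum_faceSize]
    set s : Finset M.Face := Set.toFinset {f | M.FaceAdj fe f ∨ M.FaceAdj fe' f}
      with hsdef
    have hscard : s.card = 7 := by
      rw [hsdef, Set.toFinset_card, ← Nat.card_eq_fintype_card]
      exact hnbrs
    have hfe_not : fe ∉ s := by
      rw [hsdef, Set.mem_toFinset]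
      rintro (⟨d, h1, h2⟩ | ⟨d, h1, h2⟩)
      · exact hdlf d (h1.trans h2.symm)
      · exact hnadj ⟨M.σ d, h2, by rw [M.σ_invol]; exact h1⟩
    have hfe'_not : fe' ∉ s := by
      rw [hsdef, Set.mem_toFinset]
      rintro (⟨d, h1, h2⟩ | ⟨d, h1, h2⟩)
      · exact hnadj ⟨d, h1, h2⟩
      · exact hdlf d (h1.trans h2.symm)
    have hsub : insert fe (insert fe' s) ⊆ Finset.univ := Finset.subset_univ _
    have hsum_le : ∑ f ∈ insert fe (insert fe' s), M.faceSize f ≤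
        ∑ f : M.Face, M.faceSize f :=
      Finset.sum_le_sum_of_subset hsub
    have hfe_notin : fe ∉ insert fe' s := by
      simp only [Finset.mem_insert]
      push_neg
      exact ⟨hfne, hfe_not⟩
    have hs3 : 21 ≤ ∑ f ∈ s, M.faceSize f := by
      have h := Finset.card_nsmul_le_sum s M.faceSize 3
        (fun f _ => CombMap.three_le_faceSize hsimple hdlf f)
      rw [hscard] at h
      simpa using h
    have : ∑ f ∈ insert fe (insert fe' s), M.faceSize f =
        M.faceSize fe + (M.faceSize fe' + ∑ f ∈ s, M.faceSize f) := by
      rw [Finset.sum_insert hfe_notin, Finset.sum_insert hfe'_not]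
    omega
  constructor
  · exact le_antisymm hV7 h7V
  · have h2E := CombMap.card_D_eq_two_nE (M := M)
    omega
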